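/- arXiv:1911.08820 — 2 statements merged into one kernel-verified Lean document; each statement's English description precedes it below -/
import Mathlib

section
/- For the logistic second derivative h(y) = 4ψ(y)(1−ψ(y)) with ψ(y) = e^y/(e^y+e^{-y}), the smoothness ratio bound h(ξ)/h(y) ≤ e^{2|ξ−y|} holds for all real ξ, y. -/
noncomputable def ψ (y : ℝ) : ℝ := Real.exp y / (Real.exp y + Real.exp (-y))

noncomputable def hss (y : ℝ) : ℝ := 4 * ψ y * (1 - ψ y)

lemma cosh_le_aux (a b : ℝ) : Real.cosh a ≤ Real.cosh b * Real.exp |a - b| := by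
  have h1 : Real.cosh a = Real.cosh b * Real.cosh (a - b) + Real.sinh b * Real.sinh (a - b) := by
    rw [← Real.cosh_add]; ring_nf
  have hsb : |Real.sinh b| ≤ Real.cosh b := by
    calc |Real.sinh b| = Real.sinh |b| := Real.abs_sinh b
      _ ≤ Real.cosh |b| := (Real.sinh_lt_cosh _).le
      _ = Real.cosh b := Real.cosh_abs b
  have hsd : Real.sinh |a - b| ≥ 0 := Real.sinh_nonneg_iff.mpr (abs_nonneg _)
  have h2 : Real.sinh b * Real.sinh (a - b) ≤ Real.cosh b * Real.sinh |a - b| := by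
    calc Real.sinh b * Real.sinh (a - b) ≤ |Real.sinh b * Real.sinh (a - b)| := le_abs_self _
      _ = |Real.sinh b| * Real.sinh |a - b| := by rw [abs_mul, Real.abs_sinh (a - b)]
      _ ≤ Real.cosh b * Real.sinh |a - b| := mul_le_mul_of_nonneg_right hsb hsd
  calc Real.cosh a ≤ Real.cosh b * Real.cosh |a - b| + Real.cosh b * Real.sinh |a - b| := by
        rw [h1, Real.cosh_abs]; linarith
    _ = Real.cosh b * Real.exp |a - b| := by rw [← Real.cosh_add_sinh]; ring

lemma hss_eq (y : ℝ) : hss y = (Real.cosh y)⁻¹ ^ 2 := by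
  have hs : Real.exp y + Real.exp (-y) > 0 := by positivity
  unfold hss ψ
  rw [Real.cosh_eq]
  have hmul : Real.exp y * Real.exp (-y) = 1 := by rw [← Real.exp_add]; simp
  field_simp
  nlinarith [hmul]

theorem stmt_5 (ξ y : ℝ) : hss ξ / hss y ≤ Real.exp (2 * |ξ - y|) := by
  rw [hss_eq, hss_eq]
  have hcξ : (0:ℝ) < Real.cosh ξ := Real.cosh_pos ξ
  have hcy : (0:ℝ) < Real.cosh y := Real.cosh_pos y
  have key : Real.cosh y ≤ Real.cosh ξ * Real.exp |ξ - y| := by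
    have := cosh_le_aux y ξ
    rwa [abs_sub_comm] at this
  have h2 : Real.cosh y ^ 2 ≤ Real.cosh ξ ^ 2 * Real.exp (2 * |ξ - y|) := by
    calc Real.cosh y ^ 2 = Real.cosh y * Real.cosh y := sq (Real.cosh y)
      _ ≤ (Real.cosh ξ * Real.exp |ξ - y|) * (Real.cosh ξ * Real.exp |ξ - y|) :=
          mul_le_mul key key hcy.le (by positivity)
      _ = Real.cosh ξ ^ 2 * Real.exp (2 * |ξ - y|) := by
          rw [two_mul, Real.exp_add]; ring
  have heq : (Real.cosh ξ)⁻¹ ^ 2 / (Real.cosh y)⁻¹ ^ 2 = Real.cosh y ^ 2 / Real.cosh ξ ^ 2 := by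
    field_simp
  rw [heq, div_le_iff₀ (by positivity)]
  linarith [h2]
end

section
/- For the logistic loss ℓ(y) = −r·ln ψ(y) − (1−r)·ln(1−ψ(y)) with r ∈ {0,1} and ψ(y) = e^y/(e^y+e^{-y}), the inequality ℓ'(y)²/ℓ''(y) ≥ ℓ(y) holds for all real y. -/
noncomputable def logloss (r : ℝ) (y : ℝ) : ℝ :=
  -r * Real.log (ψ y) - (1 - r) * Real.log (1 - ψ y)

lemma key_ineq (q : ℝ) (h0 : 0 < q) (h1 : q < 1) : q / (1 - q) ≥ -Real.log (1 - q) := by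
  have h1q : 0 < 1 - q := by linarith
  have h := Real.log_le_sub_one_of_pos (show (0:ℝ) < 1 / (1 - q) by positivity)
  rw [Real.log_div one_ne_zero (ne_of_gt h1q), Real.log_one] at h
  have : 1 / (1 - q) - 1 = q / (1 - q) := by field_simp; ring
  linarith [this ▸ h]

lemma psi_pos (y : ℝ) : 0 < ψ y := by
  unfold ψ; positivity

lemma psi_lt_one (y : ℝ) : ψ y < 1 := by
  unfold ψ
  rw [div_lt_one (by positivity)]
  linarith [Real.exp_pos (-y)]

lemma one_sub_psi (y : ℝ) : 1 - ψ y = Real.exp (-y) / (Real.exp y + Real.exp (-y)) := by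
  unfold ψ
  have h : Real.exp y + Real.exp (-y) ≠ 0 := by positivity
  field_simp
  ring

theorem stmt_7 (r : ℝ) (hr : r = 0 ∨ r = 1) (y : ℝ) :
    (2 * (ψ y - r)) ^ 2 / (4 * ψ y * (1 - ψ y)) ≥ logloss r y := by
  have hp0 := psi_pos y
  have hp1 := psi_lt_one y
  set p := ψ y with hp
  have h1p : 0 < 1 - p := by linarith
  rcases hr with h | h <;> subst h <;> unfold logloss
  · have hL : (2 * (p - 0)) ^ 2 / (4 * p * (1 - p)) = p / (1 - p) := by
      field_simp; ring
    rw [hL]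
    have := key_ineq p hp0 hp1
    simp only [neg_zero, zero_mul, zero_sub, ← hp]
    linarith
  · have hL : (2 * (p - 1)) ^ 2 / (4 * p * (1 - p)) = (1 - p) / p := by
      field_simp; ring
    rw [hL]
    have := key_ineq (1 - p) h1p (by linarith)
    simp only [← hp, sub_self, zero_mul, sub_zero, sub_sub_cancel] at this ⊢
    linarith
end
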